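/- Let F ⊆ Z^d be finite, A ⊆ Z^d with F ⊕ A = Z^d, and L ≤ Z^d a subgroup with A + L = A. Then for every function f : F → L, the set F_f := { v + f(v) : v ∈ F } satisfies F_f ⊕ A = Z^d. -/

import Mathlib

/-- `F ⊕ A = G`: every element of `G` has a unique representation `f + a`,
`f ∈ F`, `a ∈ A`. -/
def Tiles {G : Type*} [AddCommGroup G] (F : Finset G) (A : Set G) : Prop :=
  ∀ z : G, ∃! p : G × G, p.1 ∈ F ∧ p.2 ∈ A ∧ p.1 + p.2 = z

theorem stmt_17 (d : ℕ) (F : Finset (Fin d → ℤ)) (A : Set (Fin d → ℤ))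
    (htile : Tiles F A) (L : AddSubgroup (Fin d → ℤ))
    (hAL : ∀ v ∈ L, ∀ a : Fin d → ℤ, a + v ∈ A ↔ a ∈ A)
    (f : (Fin d → ℤ) → (Fin d → ℤ)) (hf : ∀ v ∈ F, f v ∈ L) :
    Tiles (F.image (fun v => v + f v)) A := by
  intro z
  obtain ⟨⟨v, a⟩, ⟨hv, ha, hsum⟩, huniq⟩ := htile z
  refine ⟨(v + f v, a - f v), ⟨Finset.mem_image_of_mem _ hv, ?_, by abel_nf; linear_combination (norm := abel) hsum⟩, ?_⟩
  · have := hAL (f v) (hf v hv) (a - f v)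
    simpa using this.mp (by simpa using ha)
  · rintro ⟨q1, q2⟩ ⟨hq1, hq2, hq⟩
    obtain ⟨w, hw, rfl⟩ := Finset.mem_image.mp hq1
    have hq2' : q2 + f w ∈ A := (hAL (f w) (hf w hw) q2).mpr hq2
    have hsum' : w + (q2 + f w) = z := by
      rw [← hq, add_comm q2 (f w)]; exact (add_assoc w (f w) q2).symm
    have := huniq (w, q2 + f w) ⟨hw, hq2', hsum'⟩
    have hw' : w = v := congrArg Prod.fst this
    have hq2a : q2 + f w = a := congrArg Prod.snd this
    subst hw'
    simp only [Prod.mk.injEq]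
    constructor
    · trivial
    · linear_combination (norm := abel) hq2a
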